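/- arXiv:2112.12814 — 3 statements merged into one kernel-verified Lean document; each statement's English description precedes it below -/
import Mathlib

section
/- For 1 ≤ p < q < n and real numbers a, b, the determinant of the n×n matrix M(n,p,a,q,b), which has 1's on the diagonal, off-diagonal entries M[i,i+1] = M[i+1,i] = 1/2 for all i except M[p,p+1] = M[p+1,p] = a and M[q,q+1] = M[q+1,q] = b, and zeros elsewhere, equals (1/2^n)·(n−q+1)·[(p+1)(q−p+1) − 4a²p(q−p)] − (1/2^n)·(n−q)·4b²·[(p+1)(q−p) − 4a²p(q−p−1)]. -/
noncomputable def Kc : ℕ → (ℕ → ℝ) → ℝ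
  | 0, _ => 1
  | 1, _ => 1
  | (n+2), c => Kc (n+1) (fun i => c (i+1)) - (c 0)^2 * Kc n (fun i => c (i+2))

noncomputable def Tm (n : ℕ) (c : ℕ → ℝ) : Matrix (Fin n) (Fin n) ℝ :=
  Matrix.of fun i j =>
    if (i : ℕ) = j then 1
    else if (i : ℕ) + 1 = j then c i
    else if (j : ℕ) + 1 = i then c j
    else 0

lemma twoStep {P : ℕ → Prop} (h0 : P 0) (h1 : P 1)
    (ih : ∀ n, P n → P (n+1) → P (n+2)) : ∀ n, P n := by
  intro n
  induction n using Nat.strong_induction_on with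
  | _ n IH =>
    match n with
    | 0 => exact h0
    | 1 => exact h1
    | (k+2) => exact ih k (IH k (by omega)) (IH (k+1) (by omega))

lemma det_Tm : ∀ n, ∀ c : ℕ → ℝ, (Tm n c).det = Kc n c := by
  refine twoStep ?_ ?_ ?_
  · intro c; simp [Kc, Matrix.det_fin_zero]
  · intro c; simp [Kc, Matrix.det_fin_one, Tm]
  · intro n IH1 IH2 c
    rw [Matrix.det_succ_row_zero, Fin.sum_univ_succ, Fin.sum_univ_succ]
    have hz : ∀ j : Fin n, (Tm (n+2) c) 0 j.succ.succ = 0 := by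
      intro j; simp only [Tm, Matrix.of_apply]
      split_ifs with h1 h2 h3 <;> simp_all <;> omega
    simp only [hz, mul_zero, zero_mul, mul_zero, Finset.sum_const_zero, add_zero]
    have h00 : (Tm (n+2) c) 0 0 = 1 := by simp [Tm]
    have h01 : (Tm (n+2) c) 0 1 = c 0 := by simp [Tm]
    have h01 : (Tm (n+2) c) 0 (Fin.succ 0) = c 0 := by simp [Tm]
    rw [h00, h01]
    have hsub1 : (Tm (n+2) c).submatrix Fin.succ (Fin.succAbove 0) = Tm (n+1) (fun i => c (i+1)) := by
      ext i j
      simp only [Matrix.submatrix_apply, Fin.zero_succAbove, Tm, Matrix.of_apply, Fin.val_succ]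
      split_ifs <;> first | rfl | omega | (exfalso; omega) | (congr 1; omega)
    have hcol0 : (Fin.succ (0:Fin (n+1))).succAbove 0 = 0 := by
      rw [Fin.succAbove_of_castSucc_lt] <;> simp [Fin.lt_def]
    have hcolS : ∀ j : Fin n, (Fin.succ (0:Fin (n+1))).succAbove (Fin.succ j) = (Fin.succ j).succ := by
      intro j
      rw [Fin.succAbove_of_le_castSucc]
      simp [Fin.le_def]
    have hB : ((Tm (n+2) c).submatrix Fin.succ (Fin.succ 0).succAbove).det
        = c 0 * Kc n (fun i => c (i+2)) := by
      rw [Matrix.det_succ_column_zero, Fin.sum_univ_succ]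
      have hz2 : ∀ i : Fin n, ((Tm (n+2) c).submatrix Fin.succ (Fin.succ 0).succAbove) i.succ 0 = 0 := by
        intro i
        simp only [Matrix.submatrix_apply, hcol0, Tm, Matrix.of_apply, Fin.val_succ, Fin.val_zero]

        split_ifs <;> first | rfl | omega | simp_all
      simp only [hz2, mul_zero, zero_mul, Finset.sum_const_zero, add_zero]
      have hB0 : ((Tm (n+2) c).submatrix Fin.succ (Fin.succ 0).succAbove) 0 0 = c 0 := by
        simp only [Matrix.submatrix_apply, hcol0, Tm, Matrix.of_apply, Fin.val_succ, Fin.val_zero]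
        norm_num
      have hsub2 : (((Tm (n+2) c).submatrix Fin.succ (Fin.succ 0).succAbove).submatrix
          (Fin.succAbove 0) Fin.succ) = Tm n (fun i => c (i+2)) := by
        ext i j
        simp only [Matrix.submatrix_apply, Fin.zero_succAbove, hcolS, Tm, Matrix.of_apply,
          Fin.val_succ]
        split_ifs <;> first | rfl | omega | (exfalso; omega) | (congr 1; omega)
      rw [hB0, hsub2, IH1]
      simp
    rw [hsub1, hB, IH2]
    simp only [Kc, Fin.val_succ, Fin.val_zero, Fin.isValue, pow_zero, pow_one, Nat.add_comm 1 n]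
    ring
lemma Kc_congr : ∀ n, ∀ c c' : ℕ → ℝ, (∀ i, i + 2 ≤ n → c i = c' i) → Kc n c = Kc n c' := by
  refine twoStep (by intro c c' _; rfl) (by intro c c' _; rfl) ?_
  intro n IH1 IH2 c c' h
  simp only [Kc]
  rw [h 0 (by omega), IH2 _ _ (fun i hi => h (i+1) (by omega)),
    IH1 _ _ (fun i hi => h (i+2) (by omega))]

lemma Kc_back : ∀ n, ∀ c : ℕ → ℝ, Kc (n+2) c = Kc (n+1) c - (c n)^2 * Kc n c := by
  refine twoStep ?_ ?_ ?_
  · intro c; simp [Kc]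
  · intro c; simp only [Kc]; ring
  · intro n IH1 IH2 c
    have h1 := IH2 (fun i => c (i+1))
    have h2 := IH1 (fun i => c (i+2))
    have e1 : Kc (n+2+2) c = Kc (n+3) (fun i => c (i+1)) - (c 0)^2 * Kc (n+2) (fun i => c (i+2)) := rfl
    have e2 : Kc (n+3) c = Kc (n+2) (fun i => c (i+1)) - (c 0)^2 * Kc (n+1) (fun i => c (i+2)) := rfl
    have e3 : Kc (n+2) c = Kc (n+1) (fun i => c (i+1)) - (c 0)^2 * Kc n (fun i => c (i+2)) := rfl
    rw [e1, h1, h2, e2, e3]; ring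

lemma K_half : ∀ m, Kc m (fun _ => (1/2:ℝ)) = ((m:ℝ)+1)/2^m := by
  refine twoStep (by simp [Kc]) (by simp [Kc]) ?_
  intro n IH1 IH2
  simp only [Kc]
  rw [IH1, IH2]
  push_cast
  rw [pow_succ, pow_succ]
  have h2 : (2:ℝ)^n ≠ 0 := by positivity
  field_simp
  ring

lemma K_one (s : ℕ) (a : ℝ) : ∀ k,
    Kc (s+1+k) (fun i => if i+1 = s+1 then a else (1/2:ℝ)) =
      (1/2^(s+1+k)) * (((s:ℝ)+2)*((k:ℝ)+1) - 4*a^2*((s:ℝ)+1)*(k:ℝ)) := by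
  have hbase0 : Kc (s+1) (fun i => if i+1 = s+1 then a else (1/2:ℝ)) = ((s:ℝ)+2)/2^(s+1) := by
    rw [Kc_congr (s+1) _ (fun _ => (1/2:ℝ)) (fun i hi => by rw [if_neg (by omega)]), K_half]
    push_cast; ring
  have hbase0' : Kc s (fun i => if i+1 = s+1 then a else (1/2:ℝ)) = ((s:ℝ)+1)/2^s := by
    rw [Kc_congr s _ (fun _ => (1/2:ℝ)) (fun i hi => by rw [if_neg (by omega)]), K_half]
  have h2 : ∀ m : ℕ, (2:ℝ)^m ≠ 0 := fun m => by positivity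
  refine twoStep ?_ ?_ ?_
  · rw [hbase0]; push_cast; field_simp; ring
  · have e : s+1+1 = s+2 := rfl
    rw [e, Kc_back s, hbase0, hbase0', if_pos rfl]
    push_cast
    field_simp
    ring
  · intro k IH1 IH2
    have e : s+1+(k+2) = (s+1+k)+2 := rfl
    rw [e, Kc_back (s+1+k), if_neg (by omega)]
    have e1 : s+1+k+1 = s+1+(k+1) := rfl
    rw [e1, IH2, IH1]
    push_cast
    rw [pow_succ, pow_succ]
    field_simp
    ring

lemma K_full (s t : ℕ) (a b : ℝ) : ∀ k,
    Kc (s+t+2+k) (fun i => if i+1 = s+1 then a else if i+1 = s+t+2 then b else (1/2:ℝ)) =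
      (1/2^(s+t+2+k)) *
        (((k:ℝ)+1) * (((s:ℝ)+2)*((t:ℝ)+2) - 4*a^2*((s:ℝ)+1)*((t:ℝ)+1))
          - (k:ℝ)*4*b^2 * (((s:ℝ)+2)*((t:ℝ)+1) - 4*a^2*((s:ℝ)+1)*(t:ℝ))) := by
  set c : ℕ → ℝ := fun i => if i+1 = s+1 then a else if i+1 = s+t+2 then b else (1/2:ℝ) with hc
  have hcongr : ∀ m, m ≤ s+t+2 → Kc m c = Kc m (fun i => if i+1 = s+1 then a else (1/2:ℝ)) := by
    intro m hm
    refine Kc_congr m _ _ (fun i hi => ?_)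
    simp only [hc]
    by_cases h : i+1 = s+1
    · rw [if_pos h, if_pos h]
    · rw [if_neg h, if_neg h, if_neg (by omega)]
  have h2 : ∀ m : ℕ, (2:ℝ)^m ≠ 0 := fun m => by positivity
  have hbase0 : Kc (s+t+2) c =
      (1/2^(s+t+2)) * (((s:ℝ)+2)*((t:ℝ)+2) - 4*a^2*((s:ℝ)+1)*((t:ℝ)+1)) := by
    rw [hcongr _ le_rfl]
    have e : s+t+2 = s+1+(t+1) := by omega
    rw [e, K_one s a (t+1)]
    push_cast; ring
  have hbase0' : Kc (s+t+1) c =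
      (1/2^(s+t+1)) * (((s:ℝ)+2)*((t:ℝ)+1) - 4*a^2*((s:ℝ)+1)*(t:ℝ)) := by
    rw [hcongr _ (by omega)]
    have e : s+t+1 = s+1+t := by omega
    rw [e, K_one s a t]
  refine twoStep ?_ ?_ ?_
  · rw [show s+t+2+0 = s+t+2 from rfl, hbase0]
    push_cast; ring
  · have e : s+t+2+1 = (s+t+1)+2 := rfl
    rw [e, Kc_back (s+t+1), show s+t+1+1 = s+t+2 from rfl, hbase0, hbase0']
    have hcv : c (s+t+1) = b := by
      have h1 : ¬(s+t+1+1 = s+1) := by omega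
      have h2 : s+t+1+1 = s+t+2 := by omega
      show (if s+t+1+1 = s+1 then a else if s+t+1+1 = s+t+2 then b else (1/2:ℝ)) = b
      rw [if_neg h1, if_pos h2]
    rw [hcv]
    push_cast
    rw [show s+t+2+1 = (s+t+1)+1+1 from rfl, pow_succ, pow_succ]
    field_simp
    ring
  · intro k IH1 IH2
    have e : s+t+2+(k+2) = (s+t+2+k)+2 := rfl
    rw [e, Kc_back (s+t+2+k)]
    have hcv : c (s+t+2+k) = 1/2 := by
      have h1 : ¬(s+t+2+k+1 = s+1) := by omega
      have h2 : ¬(s+t+2+k+1 = s+t+2) := by omega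
      show (if s+t+2+k+1 = s+1 then a else if s+t+2+k+1 = s+t+2 then b else (1/2:ℝ)) = 1/2
      rw [if_neg h1, if_neg h2]
    rw [hcv, show s+t+2+k+1 = s+t+2+(k+1) from rfl, IH2, IH1]
    push_cast
    rw [pow_succ, pow_succ]
    field_simp
    ring



/-- `M(n,p,a,q,b)`: the symmetric tridiagonal `n×n` matrix (1-based positions)
with unit diagonal, off-diagonal pairs `1/2` except `a` at positions `(p,p+1)`
and `b` at positions `(q,q+1)`. -/
noncomputable def Mmask (n p q : ℕ) (a b : ℝ) : Matrix (Fin n) (Fin n) ℝ :=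
  Matrix.of fun i j =>
    if (i : ℕ) = j then 1
    else if (i : ℕ) + 1 = j ∨ (j : ℕ) + 1 = i then
      (if min (i : ℕ) j + 1 = p then a
       else if min (i : ℕ) j + 1 = q then b else 1/2)
    else 0

lemma Mmask_eq_Tm (n p q : ℕ) (a b : ℝ) :
    Mmask n p q a b = Tm n (fun i => if i+1 = p then a else if i+1 = q then b else (1/2:ℝ)) := by
  ext i j
  simp only [Mmask, Tm, Matrix.of_apply]
  by_cases h0 : (i : ℕ) = j
  · rw [if_pos h0, if_pos h0]
  rw [if_neg h0, if_neg h0]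
  by_cases h1 : (i : ℕ) + 1 = j
  · rw [if_pos (Or.inl h1), if_pos h1]
    have hmin : min (i : ℕ) j = i := by omega
    rw [hmin]
  rw [if_neg h1]
  by_cases h2 : (j : ℕ) + 1 = i
  · rw [if_pos (Or.inr h2), if_pos h2]
    have hmin : min (i : ℕ) j = j := by omega
    rw [hmin]
  rw [if_neg h2, if_neg (by tauto)]

/-- Determinant formula for `M(n,p,a,q,b)`. -/
theorem det_Mmask (n p q : ℕ) (a b : ℝ)
    (hp : 1 ≤ p) (hpq : p < q) (hq : q < n) :
    (Mmask n p q a b).det =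
      (1 / 2 ^ n) * ((n : ℝ) - q + 1) *
        (((p : ℝ) + 1) * ((q : ℝ) - p + 1) - 4 * a^2 * p * ((q : ℝ) - p)) -
      (1 / 2 ^ n) * ((n : ℝ) - q) * 4 * b^2 *
        (((p : ℝ) + 1) * ((q : ℝ) - p) - 4 * a^2 * p * ((q : ℝ) - p - 1)) := by
  obtain ⟨s, rfl⟩ : ∃ s, p = s + 1 := ⟨p - 1, by omega⟩
  obtain ⟨t, rfl⟩ : ∃ t, q = s + t + 2 := ⟨q - s - 2, by omega⟩
  obtain ⟨k, rfl⟩ : ∃ k, n = s + t + 2 + k := ⟨n - (s + t + 2), by omega⟩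
  rw [Mmask_eq_Tm, det_Tm, K_full s t a b k]
  push_cast
  ring
end

section
/- Let n ≥ 4, 1 ≤ p < q < n, and a ∈ [1/2, a*(n,p)] where a*(n,p) = (1/2)√((1+1/p)(1+1/(n−p))). Then for b ≥ 1/2, the matrix M(n,p,a,q,b) is positive semidefinite if and only if b ≤ b*(n,p,a,q), where b*(n,p,a,q) = (1/2)·√( [(n−q+1)((p+1)(q−p+1) − 4a²p(q−p))] / [(n−q)((p+1)(q−p) − 4a²p(q−p−1))] ). -/
/-- `a*(n,p)`. -/
noncomputable def astar (n p : ℕ) : ℝ :=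
  (1 / 2) * Real.sqrt ((1 + 1 / (p : ℝ)) * (1 + 1 / ((n : ℝ) - p)))

/-- `b*(n,p,a,q)`. -/
noncomputable def bstar (n p : ℕ) (a : ℝ) (q : ℕ) : ℝ :=
  (1 / 2) * Real.sqrt (
    (((n : ℝ) - q + 1) *
      (((p : ℝ) + 1) * ((q : ℝ) - p + 1) - 4 * a^2 * p * ((q : ℝ) - p))) /
    (((n : ℝ) - q) *
      (((p : ℝ) + 1) * ((q : ℝ) - p) - 4 * a^2 * p * ((q : ℝ) - p - 1))))

open Finset Matrix

/-! ### auxiliary definitions -/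

noncomputable def cf (p q : ℕ) (a b : ℝ) : ℕ → ℝ :=
  fun k => if k + 1 = p then a else if k + 1 = q then b else 1/2

noncomputable def extFin {n : ℕ} (x : Fin n → ℝ) : ℕ → ℝ :=
  fun k => if h : k < n then x ⟨k, h⟩ else 0

lemma extFin_coe {n : ℕ} (x : Fin n → ℝ) (i : Fin n) : extFin x i = x i := by
  simp [extFin]

noncomputable def dseq (c : ℕ → ℝ) : ℕ → ℝ
  | 0 => 1
  | 1 => 1
  | (k+2) => dseq c (k+1) - (c k)^2 * dseq c k

@[simp] lemma dseq_zero (c : ℕ → ℝ) : dseq c 0 = 1 := rfl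
@[simp] lemma dseq_one (c : ℕ → ℝ) : dseq c 1 = 1 := rfl
lemma dseq_succ_succ (c : ℕ → ℝ) (k : ℕ) :
    dseq c (k+2) = dseq c (k+1) - (c k)^2 * dseq c k := rfl

noncomputable def Bc (p : ℕ) (a : ℝ) : ℝ := ((p:ℝ)+1) - 4*a^2*p
noncomputable def Ac (p : ℕ) (a : ℝ) : ℝ := ((p:ℝ)+1) - Bc p a * p
noncomputable def Dc (n p q : ℕ) (a : ℝ) : ℝ := -((Ac p a + Bc p a * q)/((n:ℝ)-q))
noncomputable def Gc (n p q : ℕ) (a : ℝ) : ℝ := (Ac p a + Bc p a * q) - Dc n p q a * q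

/-! ### the sum-of-squares identity -/

lemma step_alg (S1 S2 S3 D E t u v : ℝ) (hD : D ≠ 0) (hE : E ≠ 0)
    (ihm : S1 + 2 * S2 = S3 + E / D * u ^ 2) :
    S1 + (2 * S2 + 2 * (t * u * v)) + v ^ 2 =
      S3 + E / D * (u + t * D / E * v) ^ 2 + (E - t ^ 2 * D) / E * v ^ 2 := by
  rw [show S1 + (2 * S2 + 2 * (t * u * v)) + v ^ 2 = (S1 + 2 * S2) + 2 * (t * u * v) + v ^ 2 by ring,
    ihm]
  field_simp
  ring

lemma sos_identity (c : ℕ → ℝ) (n : ℕ) (hn : 1 ≤ n)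
    (hd : ∀ k, 1 ≤ k → k < n → dseq c k ≠ 0) (y : ℕ → ℝ) :
    ∑ k ∈ range n, (y k)^2
      + 2 * ∑ k ∈ range (n-1), c k * y k * y (k+1)
    = ∑ k ∈ range (n-1),
        (dseq c (k+1) / dseq c k) *
          (y k + c k * dseq c k / dseq c (k+1) * y (k+1))^2
      + (dseq c n / dseq c (n-1)) * (y (n-1))^2 := by
  induction n with
  | zero => omega
  | succ m ih =>
    rcases Nat.eq_or_lt_of_le hn with h1 | h1
    · simp [← h1]
    · have hm : 1 ≤ m := by omega
      obtain ⟨r, rfl⟩ : ∃ r, m = r + 1 := ⟨m - 1, by omega⟩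
      have ihm := ih hm (fun k hk hk' => hd k hk (by omega))
      have hdm : dseq c (r+1) ≠ 0 := hd (r+1) hm (by omega)
      have hdr : dseq c r ≠ 0 := by
        rcases Nat.eq_zero_or_pos r with h2 | h2
        · simp [h2]
        · exact hd r h2 (by omega)
      simp only [Nat.add_sub_cancel] at ihm ⊢
      rw [Finset.sum_range_succ (fun k => (y k)^2),
        Finset.sum_range_succ (fun k => c k * y k * y (k+1)),
        Finset.sum_range_succ (fun k =>
          (dseq c (k+1) / dseq c k) *
            (y k + c k * dseq c k / dseq c (k+1) * y (k+1))^2),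
        mul_add, add_right_comm _ ((y (r+1))^2), dseq_succ_succ]
      exact step_alg _ _ _ _ _ _ _ _ hdr hdm ihm

/-! ### the quadratic form of `Mmask` -/

lemma tri_sum (c : ℕ → ℝ) (y : ℕ → ℝ) (n : ℕ) :
    ∑ i ∈ range n, ∑ j ∈ range n,
      y i * ((if i = j then (1:ℝ) else if i+1 = j ∨ j+1 = i then c (min i j) else 0) * y j)
    = ∑ k ∈ range n, (y k)^2 + 2 * ∑ k ∈ range (n-1), c k * y k * y (k+1) := by
  induction n with
  | zero => simp
  | succ n ih =>
    rw [Finset.sum_range_succ]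
    have inner : ∀ i ∈ range n, ∑ j ∈ range (n+1),
        y i * ((if i = j then (1:ℝ) else if i+1 = j ∨ j+1 = i then c (min i j) else 0) * y j)
        = (∑ j ∈ range n,
            y i * ((if i = j then (1:ℝ) else if i+1 = j ∨ j+1 = i then c (min i j) else 0) * y j))
          + (if i + 1 = n then c i * y i * y n else 0) := by
      intro i hi
      rw [Finset.sum_range_succ]
      congr 1
      simp only [mem_range] at hi
      have h1 : ¬ (i = n) := by omega
      rw [if_neg h1]
      by_cases h3 : i + 1 = n
      · rw [if_pos (Or.inl h3), if_pos h3, min_eq_left (by omega)]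
        ring
      · rw [if_neg (by rintro (h|h) <;> omega), if_neg h3, zero_mul, mul_zero]
    rw [Finset.sum_congr rfl inner, Finset.sum_add_distrib, ih]
    by_cases hn : 1 ≤ n
    · have main : ∑ j ∈ range n,
          y n * ((if n = j then (1:ℝ) else if n+1 = j ∨ j+1 = n then c (min n j) else 0) * y j)
          = ∑ j ∈ range n, (if j = n - 1 then c (n-1) * y (n-1) * y n else 0) := by
        refine Finset.sum_congr rfl fun j hj => ?_
        simp only [mem_range] at hj
        have h1 : ¬ (n = j) := by omega
        rw [if_neg h1]
        by_cases h3 : j = n - 1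
        · rw [if_pos (Or.inr (by omega)), if_pos h3, min_eq_right (by omega), h3]
          ring
        · rw [if_neg (by rintro (h|h) <;> omega), if_neg h3, zero_mul, mul_zero]
      have lastrow : ∑ j ∈ range (n+1),
          y n * ((if n = j then (1:ℝ) else if n+1 = j ∨ j+1 = n then c (min n j) else 0) * y j)
          = (y n)^2 + c (n-1) * y (n-1) * y n := by
        rw [Finset.sum_range_succ, main, Finset.sum_ite_eq' (range n),
          if_pos (mem_range.2 (by omega)), if_pos rfl]
        ring
      rw [lastrow]
      have mid : ∑ i ∈ range n, (if i + 1 = n then c i * y i * y n else 0)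
          = c (n-1) * y (n-1) * y n := by
        have e : ∀ i ∈ range n, (if i + 1 = n then c i * y i * y n else 0)
            = (if i = n - 1 then c (n-1) * y (n-1) * y n else 0) := by
          intro i hi
          simp only [mem_range] at hi
          by_cases h : i + 1 = n
          · rw [if_pos h, if_pos (by omega)]
            have : i = n - 1 := by omega
            rw [this]
          · rw [if_neg h, if_neg (by omega)]
        rw [Finset.sum_congr rfl e, Finset.sum_ite_eq' (range n),
          if_pos (mem_range.2 (by omega))]
      rw [mid, Finset.sum_range_succ (fun k => (y k)^2),
        show n + 1 - 1 = (n-1) + 1 by omega,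
        Finset.sum_range_succ (fun k => c k * y k * y (k+1)),
        show n - 1 + 1 = n by omega]
      ring
    · have hn0 : n = 0 := by omega
      subst hn0
      simp [sq]

lemma quadform (n p q : ℕ) (a b : ℝ) (x : Fin n → ℝ) :
    x ⬝ᵥ (Mmask n p q a b *ᵥ x)
    = ∑ k ∈ range n, (extFin x k)^2
      + 2 * ∑ k ∈ range (n-1), cf p q a b k * extFin x k * extFin x (k+1) := by
  rw [← tri_sum (cf p q a b) (extFin x) n]
  rw [dotProduct]
  have h1 : ∀ i : Fin n,
      x i * (Mmask n p q a b *ᵥ x) i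
      = ∑ j ∈ range n,
          extFin x i * ((if (i:ℕ) = j then (1:ℝ)
            else if (i:ℕ)+1 = j ∨ j+1 = (i:ℕ) then cf p q a b (min (i:ℕ) j) else 0) * extFin x j) := by
    intro i
    rw [Matrix.mulVec, dotProduct, Finset.mul_sum]
    rw [← Fin.sum_univ_eq_sum_range (fun j =>
      extFin x i * ((if (i:ℕ) = j then (1:ℝ)
        else if (i:ℕ)+1 = j ∨ j+1 = (i:ℕ) then cf p q a b (min (i:ℕ) j) else 0) * extFin x j)) n]
    refine Finset.sum_congr rfl fun j _ => ?_
    rw [extFin_coe, extFin_coe]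
    rfl
  rw [Finset.sum_congr rfl (fun i _ => h1 i)]
  rw [← Fin.sum_univ_eq_sum_range (fun i => ∑ j ∈ range n,
      extFin x i * ((if i = j then (1:ℝ)
        else if i+1 = j ∨ j+1 = i then cf p q a b (min i j) else 0) * extFin x j)) n]

lemma Mmask_isHermitian (n p q : ℕ) (a b : ℝ) : (Mmask n p q a b).IsHermitian := by
  rw [Matrix.IsHermitian]
  ext i j
  simp only [Matrix.conjTranspose_apply, Mmask, Matrix.of_apply, star_trivial]
  rw [min_comm (j:ℕ) (i:ℕ)]
  split_ifs <;> first | rfl | omega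

/-! ### closed forms for the minor sequence -/

lemma dseq_low (c : ℕ → ℝ) (p : ℕ) (hc : ∀ k, k + 2 ≤ p → c k = 1/2) :
    ∀ k, k ≤ p → dseq c k = ((k:ℝ)+1)/2^k := by
  intro k
  induction k using Nat.strong_induction_on with
  | _ k ih =>
    intro hk
    match k with
    | 0 => norm_num
    | 1 => norm_num
    | (m+2) =>
      rw [dseq_succ_succ, hc m hk, ih (m+1) (by omega) (by omega), ih m (by omega) (by omega)]
      push_cast
      field_simp
      ring

lemma dseq_mid (c : ℕ → ℝ) (p q : ℕ) (a : ℝ) (hp : 1 ≤ p) (hpq : p < q)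
    (hcp : c (p-1) = a)
    (hc : ∀ k, k + 2 ≤ p → c k = 1/2)
    (hc2 : ∀ k, p ≤ k → k + 2 ≤ q → c k = 1/2) :
    ∀ k, p ≤ k → k ≤ q → dseq c k = (Ac p a + Bc p a * k)/2^k := by
  intro k
  induction k using Nat.strong_induction_on with
  | _ k ih =>
    intro hk1 hk2
    rcases Nat.lt_or_ge k (p+2) with hk | hk
    · rcases Nat.eq_or_lt_of_le hk1 with h | h
      · rw [← h, dseq_low c p hc p le_rfl]
        have : Ac p a + Bc p a * p = (p:ℝ) + 1 := by rw [Ac]; ring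
        rw [this]
      · have hk' : k = p + 1 := by omega
        subst hk'
        obtain ⟨m, rfl⟩ : ∃ m, p = m + 1 := ⟨p - 1, by omega⟩
        rw [dseq_succ_succ]
        have hm : m = (m + 1) - 1 := rfl
        rw [← hm] at hcp
        rw [hcp, dseq_low c (m+1) hc (m+1) le_rfl, dseq_low c (m+1) hc m (by omega)]
        rw [Ac, Bc]
        push_cast
        field_simp
        ring
    · obtain ⟨m, rfl⟩ : ∃ m, k = m + 2 := ⟨k - 2, by omega⟩
      rw [dseq_succ_succ, hc2 m (by omega) (by omega),
        ih (m+1) (by omega) (by omega) (by omega),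
        ih m (by omega) (by omega) (by omega)]
      push_cast
      field_simp
      ring

lemma dseq_lin (c : ℕ → ℝ) (q : ℕ) (G D : ℝ)
    (h0 : dseq c q = (G + D*q)/2^q)
    (h1 : dseq c (q+1) = (G + D*(q+1))/2^(q+1))
    (hc : ∀ k, q ≤ k → c k = 1/2) :
    ∀ k, q ≤ k → dseq c k = (G + D*k)/2^k := by
  intro k
  induction k using Nat.strong_induction_on with
  | _ k ih =>
    intro hk
    rcases Nat.lt_or_ge k (q+2) with h | h
    · rcases Nat.eq_or_lt_of_le hk with h2 | h2
      · rw [← h2]; exact h0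
      · have : k = q + 1 := by omega
        rw [this, h1]; push_cast; ring
    · obtain ⟨m, rfl⟩ : ∃ m, k = m + 2 := ⟨k - 2, by omega⟩
      rw [dseq_succ_succ, hc m (by omega),
        ih (m+1) (by omega) (by omega), ih m (by omega) (by omega)]
      push_cast
      field_simp
      ring

lemma ABpos (n p : ℕ) (a : ℝ) (hp : 1 ≤ p) (hpn : p < n)
    (ha : 1/2 ≤ a) (ha' : a ≤ astar n p) :
    ∀ t : ℝ, (p:ℝ) ≤ t → t ≤ (n:ℝ)-1 → 0 < Ac p a + Bc p a * t := by
  intro t ht1 ht2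
  have hp' : (1:ℝ) ≤ (p:ℝ) := by exact_mod_cast hp
  have hnp : (0:ℝ) < (n:ℝ) - p := by
    have : (p:ℝ) < n := by exact_mod_cast hpn
    linarith
  have harg : 0 ≤ (1 + 1/(p:ℝ)) * (1 + 1/((n:ℝ)-p)) := by positivity
  have ha2 : a^2 ≤ (1/4)*((1 + 1/(p:ℝ)) * (1 + 1/((n:ℝ)-p))) := by
    have h0 : (0:ℝ) ≤ a := by linarith
    have h := pow_le_pow_left₀ h0 ha' 2
    rw [astar, mul_pow, Real.sq_sqrt harg] at h
    nlinarith [h]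
  have e : (1/4)*((1+1/(p:ℝ))*(1+1/((n:ℝ)-p))) * (4*(p:ℝ)*((n:ℝ)-p))
      = ((p:ℝ)+1)*((n:ℝ)-p+1) := by
    field_simp
  have key : 4*a^2*(p:ℝ)*((n:ℝ)-p) ≤ ((p:ℝ)+1)*((n:ℝ)-p+1) := by
    have h2 := mul_le_mul_of_nonneg_right ha2 (show (0:ℝ) ≤ 4*(p:ℝ)*((n:ℝ)-p) by positivity)
    rw [e] at h2
    nlinarith [h2]
  rw [Ac, Bc]
  rcases le_or_gt 0 (Bc p a) with hB0 | hB0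
  · rw [Bc] at hB0
    nlinarith [mul_nonneg hB0 (show (0:ℝ) ≤ t - p by linarith)]
  · rw [Bc] at hB0
    nlinarith [mul_nonneg (show (0:ℝ) ≤ ((n:ℝ)-1) - t by linarith)
      (show (0:ℝ) ≤ -(((p:ℝ)+1) - 4*a^2*p) by linarith), key, hnp]

lemma num_eq (p q : ℕ) (a : ℝ) :
    ((p:ℝ)+1)*((q:ℝ)-p+1) - 4*a^2*p*((q:ℝ)-p) = Ac p a + Bc p a * q := by
  rw [Ac, Bc]; ring

lemma den_eq (p q : ℕ) (a : ℝ) :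
    ((p:ℝ)+1)*((q:ℝ)-p) - 4*a^2*p*((q:ℝ)-p-1) = Ac p a + Bc p a * ((q:ℝ)-1) := by
  rw [Ac, Bc]; ring

lemma bstar_sq (n p q : ℕ) (a : ℝ) (hq : q < n)
    (hnum : 0 < Ac p a + Bc p a * q) (hden : 0 < Ac p a + Bc p a * ((q:ℝ)-1)) :
    (bstar n p a q)^2
      = (1/4) * ((((n:ℝ)-q+1) * (Ac p a + Bc p a * q)) /
          (((n:ℝ)-q) * (Ac p a + Bc p a * ((q:ℝ)-1)))) := by
  have hnq : (0:ℝ) < (n:ℝ) - q := by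
    have : (q:ℝ) < n := by exact_mod_cast hq
    linarith
  rw [bstar, mul_pow, num_eq, den_eq, Real.sq_sqrt (by positivity)]
  ring

lemma bstar_pos (n p q : ℕ) (a : ℝ) (hq : q < n)
    (hnum : 0 < Ac p a + Bc p a * q) (hden : 0 < Ac p a + Bc p a * ((q:ℝ)-1)) :
    0 < bstar n p a q := by
  have hnq : (0:ℝ) < (n:ℝ) - q := by
    have : (q:ℝ) < n := by exact_mod_cast hq
    linarith
  rw [bstar, num_eq, den_eq]
  positivity

/-! ### the minor sequence for the critical value `b = bstar` -/

lemma dseq_cf_master (n p q : ℕ) (a : ℝ) (hn : 4 ≤ n) (hp : 1 ≤ p) (hpq : p < q) (hq : q < n)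
    (ha : 1/2 ≤ a) (ha' : a ≤ astar n p) :
    (∀ k, 1 ≤ k → k ≤ n-1 → 0 < dseq (cf p q a (bstar n p a q)) k)
    ∧ dseq (cf p q a (bstar n p a q)) n = 0 := by
  set β := bstar n p a q with hβ
  set c := cf p q a β with hc
  have hclow : ∀ k, k + 2 ≤ p → c k = 1/2 := fun k hk => by
    simp only [hc, cf]; rw [if_neg (by omega), if_neg (by omega)]
  have hcp : c (p-1) = a := by
    simp only [hc, cf]; rw [if_pos (by omega)]
  have hcmid : ∀ k, p ≤ k → k + 2 ≤ q → c k = 1/2 := fun k h1 h2 => by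
    simp only [hc, cf]; rw [if_neg (by omega), if_neg (by omega)]
  have hcq : c (q-1) = β := by
    simp only [hc, cf]; rw [if_neg (by omega), if_pos (by omega)]
  have hchigh : ∀ k, q ≤ k → c k = 1/2 := fun k h1 => by
    simp only [hc, cf]; rw [if_neg (by omega), if_neg (by omega)]
  have low := dseq_low c p hclow
  have mid := dseq_mid c p q a hp hpq hcp hclow hcmid
  have hABpos := ABpos n p a hp (by omega) ha ha'
  have hqR : (q:ℝ) ≤ (n:ℝ) - 1 := by
    have h1 : q + 1 ≤ n := hq
    have h2 : ((q:ℝ)) + 1 ≤ (n:ℝ) := by exact_mod_cast h1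
    linarith
  have hpqR : (p:ℝ) ≤ (q:ℝ) := by exact_mod_cast hpq.le
  have hnum : 0 < Ac p a + Bc p a * q := hABpos q hpqR hqR
  have hpq1R : (p:ℝ) ≤ (q:ℝ) - 1 := by
    have h1 : (p:ℝ) + 1 ≤ (q:ℝ) := by exact_mod_cast hpq
    linarith
  have hden : 0 < Ac p a + Bc p a * ((q:ℝ)-1) := hABpos _ hpq1R (by linarith)
  have hb2 := bstar_sq n p q a hq hnum hden
  have hnqR : (0:ℝ) < (n:ℝ) - q := by
    have : (q:ℝ) < (n:ℝ) := by exact_mod_cast hq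
    linarith
  have base0 : dseq c q = (Gc n p q a + Dc n p q a * q)/2^q := by
    rw [mid q hpq.le le_rfl]
    congr 1
    rw [Gc]; ring
  have base1 : dseq c (q+1) = (Gc n p q a + Dc n p q a * (q+1))/2^(q+1) := by
    have e1 : dseq c (q+1) = dseq c q - β^2 * dseq c (q-1) := by
      have h := dseq_succ_succ c (q-1)
      rw [show q-1+2 = q+1 by omega, show q-1+1 = q by omega, hcq] at h
      exact h
    have hcast : ((q-1 : ℕ):ℝ) = (q:ℝ) - 1 := by
      have : 1 ≤ q := by omega
      push_cast [this]
      ring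
    rw [e1, mid q hpq.le le_rfl, mid (q-1) (by omega) (by omega), hcast, hβ, hb2]
    have hpow1 : (2:ℝ)^q = 2^(q-1) * 2 := by
      rw [← pow_succ, show q-1+1 = q by omega]
    have hpow2 : (2:ℝ)^(q+1) = 2^(q-1) * 4 := by
      rw [show q+1 = (q-1)+2 by omega, pow_add]
      norm_num
    rw [hpow1, hpow2, Gc, Dc]
    have hP : (2:ℝ)^(q-1) ≠ 0 := by positivity
    field_simp
    ring
  have lin := dseq_lin c q (Gc n p q a) (Dc n p q a) base0 base1 hchigh
  constructor
  · intro k hk1 hk2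
    have hkR : (k:ℝ) ≤ (n:ℝ) - 1 := by
      have h1 : k + 1 ≤ n := by omega
      have h2 : ((k:ℝ)) + 1 ≤ (n:ℝ) := by exact_mod_cast h1
      linarith
    rcases le_or_gt k p with h | h
    · rw [low k h]; positivity
    · rcases le_or_gt k q with h2 | h2
      · rw [mid k h.le h2]
        have := hABpos k (by exact_mod_cast h.le) hkR
        positivity
      · rw [lin k h2.le]
        have e2 : Gc n p q a + Dc n p q a * k
            = (Ac p a + Bc p a * q) * (((n:ℝ)-k)/((n:ℝ)-q)) := by
          rw [Gc, Dc]
          field_simp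
          ring
        rw [e2]
        have hnk : (0:ℝ) < (n:ℝ) - k := by linarith
        positivity
  · rw [lin n (by omega)]
    have e3 : Gc n p q a + Dc n p q a * n = 0 := by
      rw [Gc, Dc]
      field_simp
      ring
    rw [e3]
    simp

/-! ### positive semidefiniteness at the critical value -/

lemma star_pi_eq {n : ℕ} (x : Fin n → ℝ) : star x = x := by
  funext i; simp

lemma psd_at_bstar (n p q : ℕ) (a : ℝ) (hn : 4 ≤ n) (hp : 1 ≤ p) (hpq : p < q) (hq : q < n)
    (ha : 1/2 ≤ a) (ha' : a ≤ astar n p) :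
    (Mmask n p q a (bstar n p a q)).PosSemidef := by
  obtain ⟨hdpos, hdzero⟩ := dseq_cf_master n p q a hn hp hpq hq ha ha'
  refine Matrix.PosSemidef.of_dotProduct_mulVec_nonneg (Mmask_isHermitian n p q a _) fun x => ?_
  rw [star_pi_eq, quadform,
    sos_identity (cf p q a (bstar n p a q)) n (by omega)
      (fun k h1 h2 => (hdpos k h1 (by omega)).ne') (extFin x)]
  apply add_nonneg
  · apply Finset.sum_nonneg
    intro k hk
    simp only [mem_range] at hk
    have hk1 : 0 < dseq (cf p q a (bstar n p a q)) k := by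
      rcases Nat.eq_zero_or_pos k with h | h
      · simp [h]
      · exact hdpos k h (by omega)
    have hk2 : 0 < dseq (cf p q a (bstar n p a q)) (k+1) := hdpos (k+1) (by omega) (by omega)
    positivity
  · rw [hdzero]
    simp

/-! ### sign flip -/

lemma psd_neg_flip (n p q : ℕ) (a b : ℝ) (hpq : p < q)
    (h : (Mmask n p q a b).PosSemidef) : (Mmask n p q a (-b)).PosSemidef := by
  refine Matrix.PosSemidef.of_dotProduct_mulVec_nonneg (Mmask_isHermitian n p q a _) fun x => ?_
  set y : Fin n → ℝ := fun i => if (i:ℕ) < q then x i else -x i with hy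
  have key : x ⬝ᵥ (Mmask n p q a (-b) *ᵥ x) = y ⬝ᵥ (Mmask n p q a b *ᵥ y) := by
    rw [dotProduct, dotProduct]
    refine Finset.sum_congr rfl fun i _ => ?_
    rw [Matrix.mulVec, Matrix.mulVec, dotProduct, dotProduct,
      Finset.mul_sum, Finset.mul_sum]
    refine Finset.sum_congr rfl fun j _ => ?_
    show x i * (Mmask n p q a (-b) i j * x j) = y i * (Mmask n p q a b i j * y j)
    simp only [Mmask, Matrix.of_apply, hy]
    by_cases h1 : (i:ℕ) = j
    · have : i = j := Fin.ext h1
      subst this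
      rw [if_pos rfl, if_pos rfl]
      split_ifs <;> ring
    · rw [if_neg h1, if_neg h1]
      by_cases h2 : (i:ℕ)+1 = j ∨ (j:ℕ)+1 = i
      · rw [if_pos h2, if_pos h2]
        rcases h2 with h2 | h2
        · rw [min_eq_left (by omega)]
          split_ifs <;> first | ring1 | (exfalso; omega)
        · rw [min_eq_right (by omega)]
          split_ifs <;> first | ring1 | (exfalso; omega)
      · rw [if_neg h2, if_neg h2]
        ring
  rw [star_pi_eq, key]
  have h2 := h.dotProduct_mulVec_nonneg y
  rwa [star_pi_eq] at h2

/-! ### convex combinations -/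

lemma psd_convex {n : ℕ} (M N : Matrix (Fin n) (Fin n) ℝ)
    (hM : M.PosSemidef) (hN : N.PosSemidef) (t : ℝ) (h0 : 0 ≤ t) (h1 : t ≤ 1) :
    (t • M + (1-t) • N).PosSemidef := by
  refine Matrix.PosSemidef.of_dotProduct_mulVec_nonneg ?_ fun x => ?_
  · show (t • M + (1-t) • N)ᴴ = _
    rw [Matrix.conjTranspose_add, Matrix.conjTranspose_smul, Matrix.conjTranspose_smul,
      hM.1.eq, hN.1.eq, star_trivial, star_trivial]
  · rw [Matrix.add_mulVec, dotProduct_add, Matrix.smul_mulVec,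
      Matrix.smul_mulVec, dotProduct_smul, dotProduct_smul]
    have hM2 := hM.dotProduct_mulVec_nonneg x
    have hN2 := hN.dotProduct_mulVec_nonneg x
    have := mul_nonneg h0 hM2
    have := mul_nonneg (by linarith : (0:ℝ) ≤ 1 - t) hN2
    simp only [smul_eq_mul]
    linarith

lemma Mmask_convex_eq (n p q : ℕ) (a b β : ℝ) (hβ : β ≠ 0) :
    Mmask n p q a b = ((b+β)/(2*β)) • Mmask n p q a β
      + (1 - (b+β)/(2*β)) • Mmask n p q a (-β) := by
  ext i j
  simp only [Mmask, Matrix.of_apply, Matrix.add_apply, Matrix.smul_apply, smul_eq_mul]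
  split_ifs <;> field_simp <;> ring

/-! ### the witness vector -/

noncomputable def useq (c : ℕ → ℝ) (n : ℕ) : ℕ → ℝ
  | 0 => 1
  | (j+1) => -(c (n-2-j) * dseq c (n-2-j) / dseq c (n-1-j)) * useq c n j

@[simp] lemma useq_zero (c : ℕ → ℝ) (n : ℕ) : useq c n 0 = 1 := rfl
lemma useq_succ (c : ℕ → ℝ) (n j : ℕ) :
    useq c n (j+1) = -(c (n-2-j) * dseq c (n-2-j) / dseq c (n-1-j)) * useq c n j := rfl

lemma useq_ne_zero (c : ℕ → ℝ) (n : ℕ) (hn : 1 ≤ n)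
    (hc : ∀ k, k ≤ n-2 → 0 < c k)
    (hd : ∀ k, 1 ≤ k → k ≤ n-1 → 0 < dseq c k) :
    ∀ j, j ≤ n-1 → useq c n j ≠ 0 := by
  intro j
  induction j with
  | zero => intro _; norm_num
  | succ m ih =>
    intro hm
    rw [useq_succ]
    have h1 : 0 < c (n-2-m) := hc _ (by omega)
    have h2 : 0 < dseq c (n-2-m) := by
      rcases Nat.eq_zero_or_pos (n-2-m) with h | h
      · rw [h]; norm_num
      · exact hd _ h (by omega)
    have h3 : 0 < dseq c (n-1-m) := hd _ (by omega) (by omega)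
    have h4 : useq c n m ≠ 0 := ih (by omega)
    have : c (n-2-m) * dseq c (n-2-m) / dseq c (n-1-m) > 0 := by positivity
    intro hcon
    rcases mul_eq_zero.1 hcon with h | h
    · linarith [this]
      
    · exact h4 h

lemma useq_mul_neg (c : ℕ → ℝ) (n : ℕ) (hn : 2 ≤ n)
    (hc : ∀ k, k ≤ n-2 → 0 < c k)
    (hd : ∀ k, 1 ≤ k → k ≤ n-1 → 0 < dseq c k) :
    ∀ j, j ≤ n-2 → useq c n j * useq c n (j+1) < 0 := by
  intro j hj
  have h1 : 0 < c (n-2-j) := hc _ (by omega)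
  have h2 : 0 < dseq c (n-2-j) := by
    rcases Nat.eq_zero_or_pos (n-2-j) with h | h
    · rw [h]; norm_num
    · exact hd _ h (by omega)
  have h3 : 0 < dseq c (n-1-j) := hd _ (by omega) (by omega)
  have h4 : useq c n j ≠ 0 := useq_ne_zero c n (by omega) hc hd j (by omega)
  rw [useq_succ]
  have hK : 0 < c (n-2-j) * dseq c (n-2-j) / dseq c (n-1-j) := by positivity
  have h5 : 0 < useq c n j ^ 2 := by positivity
  nlinarith [hK, h5]

/-! ### perturbation of the quadratic form in `b` -/

lemma quad_diff (n p q : ℕ) (a b β : ℝ) (hp : 1 ≤ p) (hpq : p < q) (hq : q < n)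
    (x : Fin n → ℝ) :
    x ⬝ᵥ (Mmask n p q a b *ᵥ x)
    = x ⬝ᵥ (Mmask n p q a β *ᵥ x)
      + 2*(b - β) * (extFin x (q-1) * extFin x q) := by
  rw [quadform, quadform]
  have hq1 : q - 1 + 1 = q := by omega
  have e : ∀ k ∈ range (n-1),
      cf p q a b k * extFin x k * extFin x (k+1)
      = cf p q a β k * extFin x k * extFin x (k+1)
        + (if k = q-1 then (b-β) * (extFin x (q-1) * extFin x q) else 0) := by
    intro k hk
    by_cases h : k = q - 1
    · subst h
      rw [if_pos rfl]
      simp only [cf, hq1]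
      split_ifs <;> first | ring1 | (exfalso; omega)
    · rw [if_neg h]
      simp only [cf]
      split_ifs <;> first | ring1 | (exfalso; omega)
  rw [Finset.sum_congr rfl e, Finset.sum_add_distrib,
    Finset.sum_ite_eq' (range (n-1)), if_pos (mem_range.2 (by omega))]
  ring


/-- For `a ∈ [1/2, a*(n,p)]` and `b ≥ 1/2`, `M(n,p,a,q,b) ⪰ 0` iff `b ≤ b*(n,p,a,q)`. -/
theorem Mmask_posSemidef_iff_le_bstar
    (n p q : ℕ) (a b : ℝ) (hn : 4 ≤ n) (hp : 1 ≤ p) (hpq : p < q) (hq : q < n)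
    (ha : 1/2 ≤ a) (ha' : a ≤ astar n p) (hb : 1/2 ≤ b) :
    (Mmask n p q a b).PosSemidef ↔ b ≤ bstar n p a q := by
  obtain ⟨hdpos, hdzero⟩ := dseq_cf_master n p q a hn hp hpq hq ha ha'
  have hABpos := ABpos n p a hp (by omega) ha ha'
  have hqR : (q:ℝ) ≤ (n:ℝ) - 1 := by
    have h1 : q + 1 ≤ n := hq
    have h2 : ((q:ℝ)) + 1 ≤ (n:ℝ) := by exact_mod_cast h1
    linarith
  have hpqR : (p:ℝ) ≤ (q:ℝ) := by exact_mod_cast hpq.le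
  have hnum : 0 < Ac p a + Bc p a * q := hABpos q hpqR hqR
  have hpq1R : (p:ℝ) ≤ (q:ℝ) - 1 := by
    have h1 : (p:ℝ) + 1 ≤ (q:ℝ) := by exact_mod_cast hpq
    linarith
  have hden : 0 < Ac p a + Bc p a * ((q:ℝ)-1) := hABpos _ hpq1R (by linarith)
  have hβpos : 0 < bstar n p a q := bstar_pos n p q a hq hnum hden
  constructor
  · intro hPSD
    by_contra hgt
    push_neg at hgt
    set c := cf p q a (bstar n p a q) with hc
    have hcpos : ∀ k, k ≤ n-2 → 0 < c k := by
      intro k hk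
      simp only [hc, cf]
      split_ifs
      · linarith
      · exact hβpos
      · norm_num
    set x : Fin n → ℝ := fun i => useq c n (n-1-(i:ℕ)) with hx
    have hyval : ∀ k, k < n → extFin x k = useq c n (n-1-k) := by
      intro k hk
      simp only [extFin, hx]
      rw [dif_pos hk]
    have hzero : x ⬝ᵥ (Mmask n p q a (bstar n p a q) *ᵥ x) = 0 := by
      rw [quadform, sos_identity c n (by omega)
        (fun k h1 h2 => (hdpos k h1 (by omega)).ne') (extFin x)]
      have hterm : ∀ k ∈ range (n-1),
          (dseq c (k+1) / dseq c k) *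
            (extFin x k + c k * dseq c k / dseq c (k+1) * extFin x (k+1))^2 = 0 := by
        intro k hk
        simp only [mem_range] at hk
        rw [hyval k (by omega), hyval (k+1) (by omega)]
        have h1 : n-1-k = (n-2-k)+1 := by omega
        have h2 : n-1-(k+1) = n-2-k := by omega
        rw [h1, h2, useq_succ]
        have h3 : n-2-(n-2-k) = k := by omega
        have h4 : n-1-(n-2-k) = k+1 := by omega
        rw [h3, h4]
        ring
      rw [Finset.sum_congr rfl hterm, Finset.sum_const_zero, hdzero]
      simp
    have hdiff := quad_diff n p q a b (bstar n p a q) hp hpq hq x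
    rw [hzero, zero_add] at hdiff
    have hprod : extFin x (q-1) * extFin x q < 0 := by
      rw [hyval (q-1) (by omega), hyval q (by omega)]
      have h1 : n-1-(q-1) = (n-1-q)+1 := by omega
      rw [h1]
      have hneg := useq_mul_neg c n (by omega) hcpos hdpos (n-1-q) (by omega)
      nlinarith [hneg]
    have hfin := hPSD.dotProduct_mulVec_nonneg x
    rw [star_pi_eq, hdiff] at hfin
    nlinarith [hprod, hgt, hfin]
  · intro hble
    have hPSDβ := psd_at_bstar n p q a hn hp hpq hq ha ha'
    have hPSDneg := psd_neg_flip n p q a (bstar n p a q) hpq hPSDβ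
    rw [Mmask_convex_eq n p q a b (bstar n p a q) hβpos.ne']
    apply psd_convex _ _ hPSDβ hPSDneg
    · apply div_nonneg <;> linarith
    · rw [div_le_one (by linarith)]
      linarith
end

section
/- Suppose real numbers d_i, d_j > 0 and α_i, α_j, α_1 satisfy d_i > d_j, α_i² > α_j², and α_1 ≥ Σ_{k∈T} α_k²/d_k + (α_i² − α_j²)/(d_i − d_j) for a finite set T of indices with positive d_k. Then d_i − α_i²/(α_1 − Σ_{k∈T} α_k²/d_k) ≥ d_j − α_j²/(α_1 − Σ_{k∈T} α_k²/d_k). -/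
/-- Key inequality for greedy optimality on arrowhead matrices: the ordering of
Schur-complement diagonal entries is preserved when `α₁` is sufficiently large. -/
theorem schur_diag_order_preserved
    (ι : Type*) [DecidableEq ι] (T : Finset ι)
    (d : ι → ℝ) (α : ι → ℝ) (hdT : ∀ k ∈ T, 0 < d k)
    (i j : ι) (di dj αi αj α₁ : ℝ)
    (hdi : 0 < di) (hdj : 0 < dj) (hdij : dj < di) (hαij : αj^2 < αi^2)
    (hα₁ : (∑ k ∈ T, (α k)^2 / d k) + (αi^2 - αj^2) / (di - dj) ≤ α₁)
    (hden : 0 < α₁ - ∑ k ∈ T, (α k)^2 / d k) :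
    dj - αj^2 / (α₁ - ∑ k ∈ T, (α k)^2 / d k) ≤
      di - αi^2 / (α₁ - ∑ k ∈ T, (α k)^2 / d k) := by
  set s := α₁ - ∑ k ∈ T, (α k)^2 / d k with hs
  have hdd : 0 < di - dj := by linarith
  have hkey : (αi^2 - αj^2) / (di - dj) ≤ s := by
    simp only [hs]; linarith
  have h1 : (αi^2 - αj^2) / s ≤ di - dj := by
    rw [div_le_iff₀ hden]
    rw [div_le_iff₀ hdd] at hkey
    nlinarith
  have h2 : (αi^2 - αj^2) / s = αi^2 / s - αj^2 / s := sub_div _ _ _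
  linarith [h2 ▸ h1]
end
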